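/- Fix positive integers a, b, c, d with a + b = c + d =: S. There is a threshold N₀ (depending only on a, b, c, d) with the following property: let N ≥ N₀, let M = ⌈N/(S² + abcd)⌉, and let V ⊆ {0, 1, …, M−1} be a set such that every (x, y, u, v) ∈ V⁴ with a·x + b·y = c·u + d·v has x = y = u = v. Set U = (S+1)·V = {(S+1)q : q ∈ V} ⊆ {0,…,N−1}. Then for every l ∈ ℕ, whenever x, y, u, v ∈ 𝕀(U+l) satisfy a·x + b·y = c·u + d·v, there exists j' ∈ {0, …, N−1} with x, y, u, v ∈ [j'/N, (j'+1)/N], where 𝕀(U+l) denotes the union of the intervals [j/N, (j+1)/N] over all j ∈ {0,…,N−1} with j ≡ q + l (mod N) for some q ∈ U. -/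

import Mathlib

def II (N : ℕ) (U : Finset ℕ) (l : ℕ) : Set ℝ :=
  {x : ℝ | ∃ j : ℕ, j < N ∧ (∃ q ∈ U, j % N = (q + l) % N) ∧
    x ∈ Set.Icc ((j : ℝ) / N) (((j : ℝ) + 1) / N)}

private lemma wrap_eq (N T j1 j2 e1 e2 : ℤ)
    (he1 : e1 = 0 ∨ e1 = 1) (he2 : e2 = 0 ∨ e2 = 1)
    (h1 : j1 = T - e1 * N) (h2 : j2 = T - e2 * N)
    (hj1l : 0 ≤ j1) (hj1u : j1 < N) (hj2l : 0 ≤ j2) (hj2u : j2 < N) :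
    j1 = j2 := by
  rcases he1 with rfl | rfl <;> rcases he2 with rfl | rfl <;>
    simp only [zero_mul, one_mul, sub_zero] at h1 h2 <;> omega

private lemma all_ones (a b c d : ℕ) (ha : 0 < a) (hb : 0 < b) (hc : 0 < c) (hd : 0 < d)
    (hsum : a + b = c + d) (h : a * b * c * d ≤ a + b) :
    a = 1 ∧ b = 1 ∧ c = 1 ∧ d = 1 := by
  have ha1 : (1:ℤ) ≤ a := by exact_mod_cast ha
  have hb1 : (1:ℤ) ≤ b := by exact_mod_cast hb
  have hc1 : (1:ℤ) ≤ c := by exact_mod_cast hc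
  have hd1 : (1:ℤ) ≤ d := by exact_mod_cast hd
  have hsumZ : (a:ℤ) + b = c + d := by exact_mod_cast hsum
  have hab : (a:ℤ) + b - 1 ≤ a * b := by
    nlinarith [mul_nonneg (sub_nonneg.mpr ha1) (sub_nonneg.mpr hb1)]
  have hcd : (c:ℤ) + d - 1 ≤ c * d := by
    nlinarith [mul_nonneg (sub_nonneg.mpr hc1) (sub_nonneg.mpr hd1)]
  have hZ : (a:ℤ) * b * c * d ≤ (a:ℤ) + b := by exact_mod_cast h
  have hs2 : (2:ℤ) ≤ (a:ℤ) + b := by linarith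
  have hs : (a:ℤ) + b ≤ 2 := by
    nlinarith [mul_le_mul hab hcd (by linarith) (by positivity)]
  have : a + b ≤ 2 := by exact_mod_cast hs
  omega

private lemma size_lem (a b c d : ℕ) (ha : 0 < a) (hb : 0 < b) (hc : 0 < c) (hd : 0 < d)
    (hsum : a + b = c + d) :
    (a + b) * ((a + b)^2 + a * b * c * d) ≤ (a + b)^5 := by
  have ha1 : (1:ℤ) ≤ a := by exact_mod_cast ha
  have hb1 : (1:ℤ) ≤ b := by exact_mod_cast hb
  have hc1 : (1:ℤ) ≤ c := by exact_mod_cast hc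
  have hd1 : (1:ℤ) ≤ d := by exact_mod_cast hd
  have hsumZ : (a:ℤ) + b = c + d := by exact_mod_cast hsum
  have h4ab : 4 * ((a:ℤ) * b) ≤ ((a:ℤ) + b)^2 := by nlinarith [sq_nonneg ((a:ℤ) - b)]
  have h4cd : 4 * ((c:ℤ) * d) ≤ ((a:ℤ) + b)^2 := by nlinarith [sq_nonneg ((c:ℤ) - d)]
  have hprod : 16 * ((a:ℤ) * b * c * d) ≤ ((a:ℤ) + b)^4 := by
    nlinarith [mul_le_mul h4ab h4cd (by positivity) (by positivity)]
  have hgoal : ((a:ℤ) + b) * (((a:ℤ) + b)^2 + (a:ℤ) * b * c * d) ≤ ((a:ℤ) + b)^5 := by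
    nlinarith [mul_le_mul_of_nonneg_left hprod (show (0:ℤ) ≤ (a:ℤ) + b by linarith),
      mul_le_mul_of_nonneg_left (show (4:ℤ) ≤ ((a:ℤ)+b)^2 by nlinarith)
        (show (0:ℤ) ≤ ((a:ℤ)+b)^3 by positivity)]
  exact_mod_cast hgoal

private lemma unpack (a b N l : ℕ) (V : Finset ℕ) (hN : 0 < N)
    (hUlt : ∀ w ∈ V, (a + b + 1) * w < N) (x : ℝ)
    (hx : x ∈ II N (V.image fun q => (a + b + 1) * q) l) :
    ∃ w ∈ V, ∃ j : ℕ, j < N ∧ x ∈ Set.Icc ((j : ℝ) / N) (((j : ℝ) + 1) / N) ∧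
      ∃ e : ℤ, (e = 0 ∨ e = 1) ∧
        (j : ℤ) = ((a:ℤ) + b + 1) * w + ((l % N : ℕ) : ℤ) - e * N := by
  obtain ⟨j, hjN, ⟨q, hqU, hmod⟩, hIcc⟩ := hx
  obtain ⟨w, hwV, rfl⟩ := Finset.mem_image.mp hqU
  have hj1 : j = ((a + b + 1) * w + l) % N := by
    rw [← Nat.mod_eq_of_lt hjN, hmod]
  have hmodeq : ((a + b + 1) * w + l) % N = ((a + b + 1) * w + l % N) % N :=
    Nat.ModEq.add_left _ ((Nat.mod_mod_of_dvd l dvd_rfl).symm)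
  have hj2 : j = ((a + b + 1) * w + l % N) % N := hj1.trans hmodeq
  have hwN := hUlt w hwV
  have hrN : l % N < N := Nat.mod_lt _ hN
  rcases Nat.lt_or_ge ((a + b + 1) * w + l % N) N with h | h
  · refine ⟨w, hwV, j, hjN, hIcc, 0, Or.inl rfl, ?_⟩
    rw [hj2, Nat.mod_eq_of_lt h]; push_cast; ring
  · have hsub : ((a + b + 1) * w + l % N) % N = (a + b + 1) * w + l % N - N := by
      rw [Nat.mod_eq_sub_mod h, Nat.mod_eq_of_lt (by omega)]
    have h3 : j + N = (a + b + 1) * w + l % N := by rw [hj2, hsub]; omega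
    refine ⟨w, hwV, j, hjN, hIcc, 1, Or.inr rfl, ?_⟩
    have h4 := congrArg (fun t : ℕ => (t : ℤ)) h3
    push_cast at h4 ⊢
    linarith

set_option maxHeartbeats 1600000 in
theorem stmt16 (a b c d : ℕ) (ha : 0 < a) (hb : 0 < b) (hc : 0 < c) (hd : 0 < d)
    (hsum : a + b = c + d) :
    ∃ N₀ : ℕ, ∀ N : ℕ, N₀ ≤ N →
      ∀ V : Finset ℕ,
        V ⊆ Finset.range (Nat.ceil ((N : ℝ) / (((a + b : ℕ) : ℝ) ^ 2 + (a * b * c * d : ℕ)))) →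
        (∀ x ∈ V, ∀ y ∈ V, ∀ u ∈ V, ∀ v ∈ V,
          a * x + b * y = c * u + d * v → x = y ∧ y = u ∧ u = v) →
        (V.image (fun q => (a + b + 1) * q)) ⊆ Finset.range N ∧
        ∀ l : ℕ, ∀ x y u v : ℝ,
          x ∈ II N (V.image (fun q => (a + b + 1) * q)) l →
          y ∈ II N (V.image (fun q => (a + b + 1) * q)) l →
          u ∈ II N (V.image (fun q => (a + b + 1) * q)) l →
          v ∈ II N (V.image (fun q => (a + b + 1) * q)) l →
          (a : ℝ) * x + (b : ℝ) * y = (c : ℝ) * u + (d : ℝ) * v →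
          ∃ j' : ℕ, j' < N ∧
            x ∈ Set.Icc ((j' : ℝ) / N) (((j' : ℝ) + 1) / N) ∧
            y ∈ Set.Icc ((j' : ℝ) / N) (((j' : ℝ) + 1) / N) ∧
            u ∈ Set.Icc ((j' : ℝ) / N) (((j' : ℝ) + 1) / N) ∧
            v ∈ Set.Icc ((j' : ℝ) / N) (((j' : ℝ) + 1) / N) := by
  refine ⟨(a + b)^5, fun N hN V hVsub hSidon => ?_⟩
  have hS2 : 2 ≤ a + b := by omega
  have hNpos : 0 < N := lt_of_lt_of_le (by positivity) hN
  set K : ℕ := (a + b)^2 + a * b * c * d with hKdef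
  have hKpos : 0 < K := by positivity
  have hKposR : (0:ℝ) < K := by exact_mod_cast hKpos
  have hNR : (0:ℝ) < N := by exact_mod_cast hNpos
  set M := Nat.ceil ((N : ℝ) / (((a + b : ℕ) : ℝ) ^ 2 + (a * b * c * d : ℕ))) with hMdef
  have hKR : (((a + b : ℕ) : ℝ) ^ 2 + ((a * b * c * d : ℕ) : ℝ)) = (K : ℝ) := by
    rw [hKdef]; push_cast; ring
  have hMlt : (M : ℝ) < (N : ℝ) / K + 1 := by
    rw [hMdef, hKR]
    exact Nat.ceil_lt_add_one (by positivity)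
  clear_value M
  clear hMdef
  -- U ⊆ range N
  have hUlt : ∀ w ∈ V, (a + b + 1) * w < N := by
    intro w hw
    have hwM : w < M := Finset.mem_range.mp (hVsub hw)
    have hw1 : (w : ℝ) + 1 ≤ M := by exact_mod_cast hwM
    have hwlt : (w : ℝ) < (N : ℝ) / K := by linarith
    have hwK : (w : ℝ) * K < N := (lt_div_iff₀ hKposR).mp hwlt
    have hKN : a + b + 2 ≤ K := by
      have h2 : 2 * (a + b) ≤ (a + b) * (a + b) := Nat.mul_le_mul_right _ hS2
      have habcd : 1 ≤ a * b * c * d := Nat.one_le_iff_ne_zero.mpr (by positivity)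
      rw [hKdef, pow_two]
      linarith
    have hKNR : (a : ℝ) + b + 2 ≤ K := by exact_mod_cast hKN
    have hw0 : (0:ℝ) ≤ (w:ℝ) := Nat.cast_nonneg w
    have hgoalR : ((a : ℝ) + b + 1) * w < N := by
      have hp := mul_le_mul_of_nonneg_right hKNR hw0
      linarith
    have : ((a + b + 1 : ℕ) : ℝ) * (w : ℝ) < N := by push_cast; linarith
    exact_mod_cast this
  constructor
  · intro q hq
    obtain ⟨w, hw, rfl⟩ := Finset.mem_image.mp hq
    exact Finset.mem_range.mpr (hUlt w hw)
  intro l x y u v hx hy hu hv heq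
  obtain ⟨wx, hwx, jx, hjxN, hIx, ex, hex, hjxZ⟩ := unpack a b N l V hNpos hUlt x hx
  obtain ⟨wy, hwy, jy, hjyN, hIy, ey, hey, hjyZ⟩ := unpack a b N l V hNpos hUlt y hy
  obtain ⟨wu, hwu, ju, hjuN, hIu, eu, heu, hjuZ⟩ := unpack a b N l V hNpos hUlt u hu
  obtain ⟨wv, hwv, jv, hjvN, hIv, ev, hev, hjvZ⟩ := unpack a b N l V hNpos hUlt v hv
  -- interval bounds
  have px1 : (jx : ℝ) ≤ x * N := (div_le_iff₀ hNR).mp hIx.1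
  have px2 : x * N ≤ (jx : ℝ) + 1 := (le_div_iff₀ hNR).mp hIx.2
  have py1 : (jy : ℝ) ≤ y * N := (div_le_iff₀ hNR).mp hIy.1
  have py2 : y * N ≤ (jy : ℝ) + 1 := (le_div_iff₀ hNR).mp hIy.2
  have pu1 : (ju : ℝ) ≤ u * N := (div_le_iff₀ hNR).mp hIu.1
  have pu2 : u * N ≤ (ju : ℝ) + 1 := (le_div_iff₀ hNR).mp hIu.2
  have pv1 : (jv : ℝ) ≤ v * N := (div_le_iff₀ hNR).mp hIv.1
  have pv2 : v * N ≤ (jv : ℝ) + 1 := (le_div_iff₀ hNR).mp hIv.2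
  have heqN : (a : ℝ) * (x * N) + (b : ℝ) * (y * N) = (c : ℝ) * (u * N) + (d : ℝ) * (v * N) := by
    linear_combination (N : ℝ) * heq
  have hsumR : (a : ℝ) + b = (c : ℝ) + d := by exact_mod_cast hsum
  have ca : (0:ℝ) ≤ a := Nat.cast_nonneg a
  have cb : (0:ℝ) ≤ b := Nat.cast_nonneg b
  have cc' : (0:ℝ) ≤ c := Nat.cast_nonneg c
  have cd' : (0:ℝ) ≤ d := Nat.cast_nonneg d
  have hD1R : (a:ℝ) * jx + (b:ℝ) * jy ≤ (c:ℝ) * ju + (d:ℝ) * jv + ((a:ℝ) + b) := by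
    linarith [mul_le_mul_of_nonneg_left px1 ca, mul_le_mul_of_nonneg_left py1 cb,
      mul_le_mul_of_nonneg_left pu2 cc', mul_le_mul_of_nonneg_left pv2 cd', heqN, hsumR]
  have hD2R : (c:ℝ) * ju + (d:ℝ) * jv ≤ (a:ℝ) * jx + (b:ℝ) * jy + ((a:ℝ) + b) := by
    linarith [mul_le_mul_of_nonneg_left px2 ca, mul_le_mul_of_nonneg_left py2 cb,
      mul_le_mul_of_nonneg_left pu1 cc', mul_le_mul_of_nonneg_left pv1 cd', heqN, hsumR]
  have hZ1 : (a:ℤ) * jx + (b:ℤ) * jy ≤ (c:ℤ) * ju + (d:ℤ) * jv + ((a:ℤ) + b) := by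
    exact_mod_cast hD1R
  have hZ2 : (c:ℤ) * ju + (d:ℤ) * jv ≤ (a:ℤ) * jx + (b:ℤ) * jy + ((a:ℤ) + b) := by
    exact_mod_cast hD2R
  have hNZ : (0:ℤ) < N := by exact_mod_cast hNpos
  suffices hweq : wx = wy ∧ wy = wu ∧ wu = wv by
    obtain ⟨h1, h2, h3⟩ := hweq
    have h2' : wx = wu := h1.trans h2
    have h3' : wx = wv := h2'.trans h3
    rw [← h1] at hjyZ
    rw [← h2'] at hjuZ
    rw [← h3'] at hjvZ
    have hx0 : (0:ℤ) ≤ (jx:ℤ) := Int.natCast_nonneg jx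
    have hy0 : (0:ℤ) ≤ (jy:ℤ) := Int.natCast_nonneg jy
    have hu0 : (0:ℤ) ≤ (ju:ℤ) := Int.natCast_nonneg ju
    have hv0 : (0:ℤ) ≤ (jv:ℤ) := Int.natCast_nonneg jv
    have hxN : (jx:ℤ) < N := by exact_mod_cast hjxN
    have hyN : (jy:ℤ) < N := by exact_mod_cast hjyN
    have huN : (ju:ℤ) < N := by exact_mod_cast hjuN
    have hvN : (jv:ℤ) < N := by exact_mod_cast hjvN
    have exy : (jx:ℤ) = (jy:ℤ) :=
      wrap_eq N _ _ _ _ _ hex hey hjxZ hjyZ hx0 hxN hy0 hyN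
    have exu : (jx:ℤ) = (ju:ℤ) :=
      wrap_eq N _ _ _ _ _ hex heu hjxZ hjuZ hx0 hxN hu0 huN
    have exv : (jx:ℤ) = (jv:ℤ) :=
      wrap_eq N _ _ _ _ _ hex hev hjxZ hjvZ hx0 hxN hv0 hvN
    have exy' : jx = jy := by exact_mod_cast exy
    have exu' : jx = ju := by exact_mod_cast exu
    have exv' : jx = jv := by exact_mod_cast exv
    refine ⟨jx, hjxN, hIx, ?_, ?_, ?_⟩
    · rw [exy']; exact hIy
    · rw [exu']; exact hIu
    · rw [exv']; exact hIv
  by_cases hcase : a * b * c * d ≤ a + b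
  · obtain ⟨ha1, hb1, hc1, hd1⟩ := all_ones a b c d ha hb hc hd hsum hcase
    have e1 := (hSidon wx hwx wy hwy wx hwx wy hwy (by rw [ha1, hb1, hc1, hd1])).1
    have e2 := (hSidon wy hwy wu hwu wy hwy wu hwu (by rw [ha1, hb1, hc1, hd1])).1
    have e3 := (hSidon wu hwu wv hwv wu hwu wv hwv (by rw [ha1, hb1, hc1, hd1])).1
    exact ⟨e1, e2, e3⟩
  · push_neg at hcase
    have hMpos : 0 < M := Nat.pos_of_ne_zero (by
      intro h0
      have := Finset.mem_range.mp (hVsub hwx)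
      omega)
    have hM1Z : (1:ℤ) ≤ M := by exact_mod_cast hMpos
    have hwxM : (wx:ℤ) + 1 ≤ (M:ℤ) := by exact_mod_cast Finset.mem_range.mp (hVsub hwx)
    have hwyM : (wy:ℤ) + 1 ≤ (M:ℤ) := by exact_mod_cast Finset.mem_range.mp (hVsub hwy)
    have hwuM : (wu:ℤ) + 1 ≤ (M:ℤ) := by exact_mod_cast Finset.mem_range.mp (hVsub hwu)
    have hwvM : (wv:ℤ) + 1 ≤ (M:ℤ) := by exact_mod_cast Finset.mem_range.mp (hVsub hwv)
    have hsumZ : (a:ℤ) + b = (c:ℤ) + d := by exact_mod_cast hsum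
    have hid : (a:ℤ) * jx + (b:ℤ) * jy - ((c:ℤ) * ju + (d:ℤ) * jv)
        = ((a:ℤ) + b + 1) * ((a:ℤ) * wx + (b:ℤ) * wy - (c:ℤ) * wu - (d:ℤ) * wv)
          - (N:ℤ) * ((a:ℤ) * ex + (b:ℤ) * ey - (c:ℤ) * eu - (d:ℤ) * ev) := by
      linear_combination (a:ℤ) * hjxZ + (b:ℤ) * hjyZ - (c:ℤ) * hjuZ - (d:ℤ) * hjvZ
        + ((l % N : ℕ) : ℤ) * hsumZ
    have haZ : (0:ℤ) ≤ a := Int.natCast_nonneg a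
    have hbZ : (0:ℤ) ≤ b := Int.natCast_nonneg b
    have hcZ : (0:ℤ) ≤ c := Int.natCast_nonneg c
    have hdZ : (0:ℤ) ≤ d := Int.natCast_nonneg d
    have hwx0 : (0:ℤ) ≤ wx := Int.natCast_nonneg wx
    have hwy0 : (0:ℤ) ≤ wy := Int.natCast_nonneg wy
    have hwu0 : (0:ℤ) ≤ wu := Int.natCast_nonneg wu
    have hwv0 : (0:ℤ) ≤ wv := Int.natCast_nonneg wv
    have h10 : ((a:ℤ) + b) * ((M:ℤ) - 1) = ((c:ℤ) + d) * ((M:ℤ) - 1) := by rw [hsumZ]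
    have hDub : (a:ℤ) * wx + (b:ℤ) * wy - (c:ℤ) * wu - (d:ℤ) * wv
        ≤ ((a:ℤ) + b) * ((M:ℤ) - 1) := by
      linarith [mul_le_mul_of_nonneg_left (show (wx:ℤ) ≤ (M:ℤ) - 1 by linarith) haZ,
        mul_le_mul_of_nonneg_left (show (wy:ℤ) ≤ (M:ℤ) - 1 by linarith) hbZ,
        mul_nonneg hcZ hwu0, mul_nonneg hdZ hwv0]
    have hDlb : -(((a:ℤ) + b) * ((M:ℤ) - 1))
        ≤ (a:ℤ) * wx + (b:ℤ) * wy - (c:ℤ) * wu - (d:ℤ) * wv := by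
      linarith [mul_le_mul_of_nonneg_left (show (wu:ℤ) ≤ (M:ℤ) - 1 by linarith) hcZ,
        mul_le_mul_of_nonneg_left (show (wv:ℤ) ≤ (M:ℤ) - 1 by linarith) hdZ,
        mul_nonneg haZ hwx0, mul_nonneg hbZ hwy0, h10]
    have hE0 : (a:ℤ) * ex + (b:ℤ) * ey - (c:ℤ) * eu - (d:ℤ) * ev = 0 := by
      by_contra hne
      have hEbound : (N:ℤ) ≤ ((a:ℤ) + b + 1) * (((a:ℤ) + b) * ((M:ℤ) - 1)) + ((a:ℤ) + b) := by
        rcases lt_or_gt_of_ne hne with hE | hE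
        · have hE1 : (a:ℤ) * ex + (b:ℤ) * ey - (c:ℤ) * eu - (d:ℤ) * ev ≤ -1 := by
            linarith [Int.lt_iff_add_one_le.mp hE]
          have hNE : (N:ℤ) ≤ (N:ℤ) * (-((a:ℤ) * ex + (b:ℤ) * ey - (c:ℤ) * eu - (d:ℤ) * ev)) :=
            le_mul_of_one_le_right (le_of_lt hNZ) (by linarith)
          have hmulD : ((a:ℤ) + b + 1) * (-((a:ℤ) * wx + (b:ℤ) * wy - (c:ℤ) * wu - (d:ℤ) * wv))
              ≤ ((a:ℤ) + b + 1) * (((a:ℤ) + b) * ((M:ℤ) - 1)) :=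
            mul_le_mul_of_nonneg_left (by linarith) (by positivity)
          linarith [hNE, hmulD, hid, hZ1]
        · have hE1 : (1:ℤ) ≤ (a:ℤ) * ex + (b:ℤ) * ey - (c:ℤ) * eu - (d:ℤ) * ev := by
            linarith [Int.lt_iff_add_one_le.mp hE]
          have hNE : (N:ℤ) ≤ (N:ℤ) * ((a:ℤ) * ex + (b:ℤ) * ey - (c:ℤ) * eu - (d:ℤ) * ev) :=
            le_mul_of_one_le_right (le_of_lt hNZ) hE1
          have hmulD : ((a:ℤ) + b + 1) * ((a:ℤ) * wx + (b:ℤ) * wy - (c:ℤ) * wu - (d:ℤ) * wv)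
              ≤ ((a:ℤ) + b + 1) * (((a:ℤ) + b) * ((M:ℤ) - 1)) :=
            mul_le_mul_of_nonneg_left hDub (by positivity)
          linarith [hNE, hmulD, hid, hZ2]
      -- real estimate contradicting hEbound
      have hKge : ((a:ℝ) + b + 1) * ((a:ℝ) + b) + 1 ≤ (K:ℝ) := by
        have habcd1 : a + b + 1 ≤ a * b * c * d := hcase
        have hnat : (a + b + 1) * (a + b) + 1 ≤ K := by
          rw [hKdef, pow_two]; linarith
        calc ((a:ℝ) + b + 1) * ((a:ℝ) + b) + 1
            = (((a + b + 1) * (a + b) + 1 : ℕ) : ℝ) := by push_cast; ring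
          _ ≤ (K:ℝ) := by exact_mod_cast hnat
      have hSKN : ((a:ℝ) + b) * (K:ℝ) ≤ N := by
        have h5 : (a + b) * K ≤ (a + b)^5 := by
          rw [hKdef]; exact size_lem a b c d ha hb hc hd hsum
        have h6 : (a + b) * K ≤ N := le_trans h5 hN
        calc ((a:ℝ) + b) * (K:ℝ) = (((a + b) * K : ℕ) : ℝ) := by push_cast; ring
          _ ≤ (N:ℝ) := by exact_mod_cast h6
      have hMK : ((M:ℝ) - 1) * K < N := by
        have h6 : (M:ℝ) - 1 < (N:ℝ) / K := by linarith
        calc ((M:ℝ) - 1) * K < ((N:ℝ) / K) * K := mul_lt_mul_of_pos_right h6 hKposR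
          _ = N := div_mul_cancel₀ _ (ne_of_gt hKposR)
      have hM1R : (0:ℝ) ≤ (M:ℝ) - 1 := by
        have : (1:ℝ) ≤ M := by exact_mod_cast hMpos
        linarith
      have hS2R : (2:ℝ) ≤ (a:ℝ) + b := by exact_mod_cast hS2
      have hposS : (0:ℝ) < ((a:ℝ) + b + 1) * ((a:ℝ) + b) :=
        mul_pos (by linarith) (by linarith)
      have h7 := mul_lt_mul_of_pos_left hMK hposS
      have h8 := mul_le_mul_of_nonneg_right hKge (le_of_lt hNR)
      have h9 : (((a:ℝ) + b + 1) * (((a:ℝ) + b) * ((M:ℝ) - 1)) + ((a:ℝ) + b)) * K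
          < (N:ℝ) * K := by linarith [h7, h8, hSKN]
      have hNbigR : ((a:ℝ) + b + 1) * (((a:ℝ) + b) * ((M:ℝ) - 1)) + ((a:ℝ) + b) < N :=
        lt_of_mul_lt_mul_right h9 (le_of_lt hKposR)
      have hNbig : ((a:ℤ) + b + 1) * (((a:ℤ) + b) * ((M:ℤ) - 1)) + ((a:ℤ) + b) < (N:ℤ) := by
        exact_mod_cast hNbigR
      linarith
    have hD0 : (a:ℤ) * wx + (b:ℤ) * wy - (c:ℤ) * wu - (d:ℤ) * wv = 0 := by
      rw [hE0, mul_zero, sub_zero] at hid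
      rcases lt_trichotomy ((a:ℤ) * wx + (b:ℤ) * wy - (c:ℤ) * wu - (d:ℤ) * wv) 0 with h | h | h
      · exfalso
        have h1 : (a:ℤ) * wx + (b:ℤ) * wy - (c:ℤ) * wu - (d:ℤ) * wv ≤ -1 := by
          linarith [Int.lt_iff_add_one_le.mp h]
        have h2 := mul_le_mul_of_nonneg_left h1 (show (0:ℤ) ≤ (a:ℤ) + b + 1 by positivity)
        linarith [hZ2, hid, h2]
      · exact h
      · exfalso
        have h1 : (1:ℤ) ≤ (a:ℤ) * wx + (b:ℤ) * wy - (c:ℤ) * wu - (d:ℤ) * wv := by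
          linarith [Int.lt_iff_add_one_le.mp h]
        have h2 := mul_le_mul_of_nonneg_left h1 (show (0:ℤ) ≤ (a:ℤ) + b + 1 by positivity)
        linarith [hZ1, hid, h2]
    have hnat : a * wx + b * wy = c * wu + d * wv := by
      have hZn : (a:ℤ) * wx + (b:ℤ) * wy = (c:ℤ) * wu + (d:ℤ) * wv := by linarith
      exact_mod_cast hZn
    exact hSidon wx hwx wy hwy wu hwu wv hwv hnat
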